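/- Let φ_1,…,φ_n be random variables on a probability space with A_k ≤ φ_k ≤ B_k almost surely, where A_k < 0 < B_k. Then for every λ > 0 one has P(∑_{k=1}^n φ_k > λ) ≤ (1 + μ(φ,𝔐_n)) · exp(−2λ² / ∑_{k=1}^n (B_k − A_k)²), where 𝔐_n is the family of all nonempty subsets of {1,…,n}. -/

import Mathlib

open MeasureTheory

section AuxHoeffding
open Real

lemma hoeff_f_nonneg (p : ℝ) (hp : 0 < p) (hp1 : p < 1) (u : ℝ) :
    -(p*u) + Real.log (1 - p + p * Real.exp u) ≤ u^2/8 := by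
  set g : ℝ → ℝ := fun u => 1 - p + p * Real.exp u with hgdef
  have hg : ∀ u, 0 < g u := fun u => add_pos (by linarith) (mul_pos hp (exp_pos u))
  set f : ℝ → ℝ := fun u => u^2/8 + p*u - Real.log (g u) with hfdef
  set f' : ℝ → ℝ := fun u => u/4 + p - p*Real.exp u/(g u) with hf'def
  set f'' : ℝ → ℝ := fun u => 1/4 - (p*Real.exp u*(1-p))/(g u)^2 with hf''def
  have hg' : ∀ u, HasDerivAt g (p * Real.exp u) u := by
    intro u
    exact ((Real.hasDerivAt_exp u).const_mul p).const_add (1-p)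
  have hDf : ∀ u, HasDerivAt f (f' u) u := by
    intro u
    have h1 : HasDerivAt (fun x : ℝ => x^2/8 + p*x) (2*u^1/8 + p) u := by
      refine (((hasDerivAt_pow 2 u).div_const 8).add ((hasDerivAt_id u).const_mul p)).congr_deriv ?_
      norm_num
    have h2 : HasDerivAt (fun x => Real.log (g x)) (p * Real.exp u / g u) u :=
      (hg' u).log (hg u).ne'
    have := h1.sub h2
    refine this.congr_deriv ?_
    simp only [hf'def]; ring
  have hDf' : ∀ u, HasDerivAt f' (f'' u) u := by
    intro u
    have hnum : HasDerivAt (fun x : ℝ => p * Real.exp x) (p * Real.exp u) u :=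
      (Real.hasDerivAt_exp u).const_mul p
    have hq : HasDerivAt (fun x => p * Real.exp x / g x)
        ((p * Real.exp u * g u - p * Real.exp u * (p * Real.exp u)) / (g u)^2) u :=
      hnum.div (hg' u) (hg u).ne'
    have h1 : HasDerivAt (fun x : ℝ => x/4 + p) (1/4) u := by
      simpa using ((hasDerivAt_id u).div_const 4).add_const p
    have := h1.sub hq
    refine this.congr_deriv ?_
    simp only [hf''def]
    ring
  have h2 : ∀ u, 0 ≤ f'' u := by
    intro u
    have he := exp_pos u
    have hgu := hg u
    simp only [hf''def]
    rw [sub_nonneg, div_le_iff₀ (by positivity)]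
    have : g u = (1-p) + p * Real.exp u := by simp [hgdef]
    nlinarith [sq_nonneg ((1-p) - p * Real.exp u)]
  have hmono' : Monotone f' := by
    apply monotone_of_deriv_nonneg (fun u => (hDf' u).differentiableAt)
    intro u; rw [(hDf' u).deriv]; exact h2 u
  have hf'0 : f' 0 = 0 := by
    simp [hf'def, hgdef, Real.exp_zero]
  have hf0 : f 0 = 0 := by
    simp [hfdef, hgdef, Real.exp_zero]
  have hfnn : ∀ u, 0 ≤ f u := by
    intro u
    rcases le_total 0 u with h | h
    · have hm : MonotoneOn f (Set.Ici 0) := by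
        apply monotoneOn_of_deriv_nonneg (convex_Ici 0)
          (fun x _ => (hDf x).differentiableAt.continuousAt.continuousWithinAt)
          (fun x _ => (hDf x).differentiableAt.differentiableWithinAt)
        intro x hx
        rw [(hDf x).deriv, ← hf'0]
        exact hmono' (le_of_lt (by simpa using hx))
      have := hm (Set.self_mem_Ici) (by exact h) h
      rwa [hf0] at this
    · have hm : AntitoneOn f (Set.Iic 0) := by
        apply antitoneOn_of_deriv_nonpos (convex_Iic 0)
          (fun x _ => (hDf x).differentiableAt.continuousAt.continuousWithinAt)
          (fun x _ => (hDf x).differentiableAt.differentiableWithinAt)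
        intro x hx
        rw [(hDf x).deriv, ← hf'0]
        exact hmono' (le_of_lt (by simpa using hx))
      have := hm (by exact h) Set.self_mem_Iic h
      rwa [hf0] at this
  have := hfnn u
  simp only [hfdef] at this
  linarith

lemma hoeff_exp (p u : ℝ) (hp : 0 < p) (hp1 : p < 1) :
    (1-p) * Real.exp (-(p*u)) + p * Real.exp ((1-p)*u) ≤ Real.exp (u^2/8) := by
  have hg : 0 < 1 - p + p * Real.exp u := add_pos (by linarith) (mul_pos hp (exp_pos u))
  have h1 : (1-p) * Real.exp (-(p*u)) + p * Real.exp ((1-p)*u)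
      = Real.exp (-(p*u)) * (1 - p + p * Real.exp u) := by
    rw [show (1-p)*u = -(p*u) + u by ring, Real.exp_add]
    ring
  rw [h1, ← Real.exp_log hg, ← Real.exp_add]
  exact Real.exp_le_exp.2 (hoeff_f_nonneg p hp hp1 u)

lemma hoeff_a (A B t : ℝ) (hA : A < 0) (hB : 0 < B) :
    (B * Real.exp (t*A) - A * Real.exp (t*B)) / (B - A) ≤ Real.exp (t^2*(B-A)^2/8) := by
  have hBA : 0 < B - A := by linarith
  have hne : B - A ≠ 0 := hBA.ne'
  have hp : 0 < -A/(B-A) := div_pos (by linarith) hBA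
  have hp1 : -A/(B-A) < 1 := (div_lt_one hBA).2 (by linarith)
  have h := hoeff_exp (-A/(B-A)) (t*(B-A)) hp hp1
  have e1 : -(-A/(B-A)*(t*(B-A))) = t*A := by field_simp
  have e2 : (1 - -A/(B-A))*(t*(B-A)) = t*B := by field_simp; ring
  have e3 : (t*(B-A))^2/8 = t^2*(B-A)^2/8 := by ring
  rw [e1, e2, e3] at h
  calc (B * Real.exp (t*A) - A * Real.exp (t*B)) / (B - A)
      = (1 - -A/(B-A)) * Real.exp (t*A) + (-A/(B-A)) * Real.exp (t*B) := by
        field_simp; ring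
    _ ≤ _ := h

lemma line_bound (A B t x : ℝ) (hA : A < 0) (hB : 0 < B) (hx1 : A ≤ x) (hx2 : x ≤ B) :
    Real.exp (t*x) ≤ (B * Real.exp (t*A) - A * Real.exp (t*B)) / (B - A)
      + (Real.exp (t*B) - Real.exp (t*A)) / (B - A) * x := by
  have hBA : 0 < B - A := by linarith
  have hne : B - A ≠ 0 := hBA.ne'
  set s : ℝ := (B - x)/(B - A) with hs
  have hs0 : 0 ≤ s := div_nonneg (by linarith) hBA.le
  have hs1 : 0 ≤ 1 - s := by
    rw [hs]; rw [sub_nonneg, div_le_one hBA]; linarith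
  have hc := convexOn_exp.2 (Set.mem_univ (t*A)) (Set.mem_univ (t*B)) hs0 hs1 (by ring)
  simp only [smul_eq_mul] at hc
  have ex : s*(t*A) + (1-s)*(t*B) = t*x := by rw [hs]; field_simp; ring
  rw [ex] at hc
  refine hc.trans_eq ?_
  rw [hs]
  field_simp
  ring

lemma b_nonneg (A B t : ℝ) (hA : A < 0) (hB : 0 < B) (ht : 0 ≤ t) :
    0 ≤ (Real.exp (t*B) - Real.exp (t*A)) / (B - A) :=
  div_nonneg (sub_nonneg.2 (Real.exp_le_exp.2 (by nlinarith))) (by linarith)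

lemma bC_le_a (A B t : ℝ) (hA : A < 0) (hB : 0 < B) :
    (Real.exp (t*B) - Real.exp (t*A)) / (B - A) * min (-A) B
      ≤ (B * Real.exp (t*A) - A * Real.exp (t*B)) / (B - A) := by
  have hBA : 0 < B - A := by linarith
  rw [div_mul_eq_mul_div, div_le_div_iff_of_pos_right hBA]
  have hC1 : min (-A) B ≤ -A := min_le_left _ _
  have hC2 : min (-A) B ≤ B := min_le_right _ _
  have hC0 : 0 < min (-A) B := lt_min (by linarith) hB
  nlinarith [Real.exp_pos (t*A), Real.exp_pos (t*B)]

lemma one_le_a (A B t : ℝ) (hA : A < 0) (hB : 0 < B) :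
    1 ≤ (B * Real.exp (t*A) - A * Real.exp (t*B)) / (B - A) := by
  have := line_bound A B t 0 hA hB hA.le hB.le
  simpa using this

end AuxHoeffding

/-- The multiplicative error `μ(φ, 𝔐_n)` of a system `φ` over the family of all nonempty
subsets of `{1,…,n}`. -/
noncomputable def multErrorAll {Ω : Type*} [MeasurableSpace Ω] (P : Measure Ω) {n : ℕ}
    (A B : Fin n → ℝ) (φ : Fin n → Ω → ℝ) : ℝ :=
  ∑ S ∈ Finset.univ.powerset.filter (fun S : Finset (Fin n) => S.Nonempty),
    (∏ j ∈ S, min (-(A j)) (B j))⁻¹ * |∫ ω, ∏ j ∈ S, φ j ω ∂P|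

theorem stmt_4 {Ω : Type*} [MeasurableSpace Ω] (P : Measure Ω) [IsProbabilityMeasure P]
    (n : ℕ) (A B : Fin n → ℝ) (hA : ∀ k, A k < 0) (hB : ∀ k, 0 < B k)
    (φ : Fin n → Ω → ℝ) (hφm : ∀ k, Measurable (φ k))
    (hφb : ∀ k, ∀ᵐ ω ∂P, A k ≤ φ k ω ∧ φ k ω ≤ B k)
    (lam : ℝ) (hlam : 0 < lam) :
    (P {ω | lam < ∑ k, φ k ω}).toReal ≤
      (1 + multErrorAll P A B φ) *
        Real.exp (-(2 * lam ^ 2) / ∑ k, (B k - A k) ^ 2) := by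
  classical
  have hμnn : 0 ≤ multErrorAll P A B φ := by
    apply Finset.sum_nonneg
    intro S hS
    have hpC : 0 < ∏ j ∈ S, min (-(A j)) (B j) :=
      Finset.prod_pos (fun j _ => lt_min (by linarith [hA j]) (hB j))
    positivity
  have hP1 : (P {ω | lam < ∑ k, φ k ω}).toReal ≤ 1 := by
    have h := prob_le_one (μ := P) (s := {ω | lam < ∑ k, φ k ω})
    have := ENNReal.toReal_mono (by simp) h
    simpa using this
  set σ2 : ℝ := ∑ k, (B k - A k)^2 with hσ2
  by_cases hσ : σ2 = 0
  · rw [hσ, div_zero, Real.exp_zero, mul_one]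
    linarith
  have hσnn : 0 ≤ σ2 := Finset.sum_nonneg (fun k _ => sq_nonneg _)
  have hσpos : 0 < σ2 := lt_of_le_of_ne hσnn (Ne.symm hσ)
  set t : ℝ := 4*lam/σ2 with htdef
  have ht : 0 < t := by positivity
  set a : Fin n → ℝ := fun k => (B k * Real.exp (t*A k) - A k * Real.exp (t*B k))/(B k - A k)
    with hadef
  set b : Fin n → ℝ := fun k => (Real.exp (t*B k) - Real.exp (t*A k))/(B k - A k) with hbdef
  have ha1 : ∀ k, 1 ≤ a k := fun k => one_le_a _ _ _ (hA k) (hB k)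
  have ha0 : ∀ k, 0 ≤ a k := fun k => le_trans zero_le_one (ha1 k)
  have hb0 : ∀ k, 0 ≤ b k := fun k => b_nonneg _ _ _ (hA k) (hB k) ht.le
  have hbC : ∀ k, b k * min (-(A k)) (B k) ≤ a k := fun k => bC_le_a _ _ _ (hA k) (hB k)
  have hC0 : ∀ k, (0:ℝ) < min (-(A k)) (B k) := fun k => lt_min (by linarith [hA k]) (hB k)
  set D : Fin n → ℝ := fun k => max (-(A k)) (B k) with hDdef
  have hφball : ∀ᵐ ω ∂P, ∀ k, A k ≤ φ k ω ∧ φ k ω ≤ B k := ae_all_iff.mpr hφb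
  have habs : ∀ᵐ ω ∂P, ∀ k, |φ k ω| ≤ D k := by
    filter_upwards [hφball] with ω hω k
    rw [abs_le]
    constructor
    · have := le_max_left (-(A k)) (B k)
      have := (hω k).1
      simp only [hDdef]
      linarith [le_max_left (-(A k)) (B k)]
    · exact (hω k).2.trans (le_max_right _ _)
  have hprodInt : ∀ S : Finset (Fin n), Integrable (fun ω => ∏ j ∈ S, φ j ω) P := by
    intro S
    apply Integrable.mono' (integrable_const (∏ j ∈ S, D j))
      (Finset.measurable_prod S (fun j _ => hφm j)).aestronglyMeasurable
    filter_upwards [habs] with ω hω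
    rw [Real.norm_eq_abs, Finset.abs_prod]
    exact Finset.prod_le_prod (fun j _ => abs_nonneg _) (fun j _ => hω j)
  have hSum_meas : Measurable (fun ω => ∑ k, φ k ω) :=
    Finset.measurable_sum _ (fun k _ => hφm k)
  have hexpInt : Integrable (fun ω => Real.exp (t * ∑ k, φ k ω)) P := by
    apply Integrable.mono' (integrable_const (Real.exp (t * ∑ k, B k)))
      ((hSum_meas.const_mul t).exp).aestronglyMeasurable
    filter_upwards [hφball] with ω hω
    rw [Real.norm_eq_abs, Real.abs_exp]
    apply Real.exp_le_exp.2
    apply mul_le_mul_of_nonneg_left _ ht.le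
    exact Finset.sum_le_sum (fun k _ => (hω k).2)
  -- pointwise expansion identity
  have h1 : ∀ ω, ∏ k, (a k + b k * φ k ω)
      = ∑ S ∈ Finset.univ.powerset,
          (∏ j ∈ S, b j) * ((∏ j ∈ Finset.univ \ S, a j) * ∏ j ∈ S, φ j ω) := by
    intro ω
    have e : ∏ k, (a k + b k * φ k ω) = ∏ k, (b k * φ k ω + a k) :=
      Finset.prod_congr rfl (fun k _ => add_comm _ _)
    rw [e, Finset.prod_add]
    refine Finset.sum_congr rfl (fun S _ => ?_)
    rw [Finset.prod_mul_distrib]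
    ring
  have hIntS : ∀ S : Finset (Fin n), Integrable
      (fun ω => (∏ j ∈ S, b j) * ((∏ j ∈ Finset.univ \ S, a j) * ∏ j ∈ S, φ j ω)) P :=
    fun S => ((hprodInt S).const_mul _).const_mul _
  have hprodabInt : Integrable (fun ω => ∏ k, (a k + b k * φ k ω)) P := by
    rw [show (fun ω => ∏ k, (a k + b k * φ k ω))
        = fun ω => ∑ S ∈ Finset.univ.powerset,
            (∏ j ∈ S, b j) * ((∏ j ∈ Finset.univ \ S, a j) * ∏ j ∈ S, φ j ω)
      from funext h1]
    exact integrable_finset_sum _ (fun S _ => hIntS S)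
  have hstep1 : ∫ ω, Real.exp (t * ∑ k, φ k ω) ∂P ≤ ∫ ω, ∏ k, (a k + b k * φ k ω) ∂P := by
    apply integral_mono_ae hexpInt hprodabInt
    filter_upwards [hφball] with ω hω
    rw [Finset.mul_sum, Real.exp_sum]
    exact Finset.prod_le_prod (fun k _ => (Real.exp_pos _).le)
      (fun k _ => line_bound _ _ _ _ (hA k) (hB k) (hω k).1 (hω k).2)
  have hexpand : ∫ ω, ∏ k, (a k + b k * φ k ω) ∂P
      = ∑ S ∈ Finset.univ.powerset,
          (∏ j ∈ S, b j) * ((∏ j ∈ Finset.univ \ S, a j) * ∫ ω, ∏ j ∈ S, φ j ω ∂P) := by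
    calc ∫ ω, ∏ k, (a k + b k * φ k ω) ∂P
        = ∫ ω, ∑ S ∈ Finset.univ.powerset,
            (∏ j ∈ S, b j) * ((∏ j ∈ Finset.univ \ S, a j) * ∏ j ∈ S, φ j ω) ∂P := by
          simp only [h1]
      _ = ∑ S ∈ Finset.univ.powerset,
            ∫ ω, (∏ j ∈ S, b j) * ((∏ j ∈ Finset.univ \ S, a j) * ∏ j ∈ S, φ j ω) ∂P :=
          integral_finset_sum _ (fun S _ => hIntS S)
      _ = _ := Finset.sum_congr rfl (fun S _ => by
            rw [integral_const_mul, integral_const_mul])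
  have hbound2 : ∑ S ∈ Finset.univ.powerset,
      (∏ j ∈ S, b j) * ((∏ j ∈ Finset.univ \ S, a j) * ∫ ω, ∏ j ∈ S, φ j ω ∂P)
      ≤ (∏ k, a k) * (1 + multErrorAll P A B φ) := by
    rw [← Finset.sum_filter_add_sum_filter_not Finset.univ.powerset
      (fun S : Finset (Fin n) => S.Nonempty)]
    have hempty : Finset.univ.powerset.filter
        (fun S : Finset (Fin n) => ¬S.Nonempty) = {∅} := by
      ext S
      simp [Finset.not_nonempty_iff_eq_empty]
    rw [hempty, Finset.sum_singleton]
    have hEmptyTerm : (∏ j ∈ (∅ : Finset (Fin n)), b j) *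
        ((∏ j ∈ Finset.univ \ (∅ : Finset (Fin n)), a j) *
          ∫ ω, ∏ j ∈ (∅ : Finset (Fin n)), φ j ω ∂P) = ∏ k, a k := by
      simp
    rw [hEmptyTerm, mul_add, mul_one]
    have hrest : ∑ S ∈ Finset.univ.powerset.filter (fun S : Finset (Fin n) => S.Nonempty),
        (∏ j ∈ S, b j) * ((∏ j ∈ Finset.univ \ S, a j) * ∫ ω, ∏ j ∈ S, φ j ω ∂P)
        ≤ (∏ k, a k) * multErrorAll P A B φ := by
      rw [multErrorAll, Finset.mul_sum]
      apply Finset.sum_le_sum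
      intro S hS
      have hpb : 0 ≤ ∏ j ∈ S, b j := Finset.prod_nonneg (fun j _ => hb0 j)
      have hpa' : 0 ≤ ∏ j ∈ Finset.univ \ S, a j := Finset.prod_nonneg (fun j _ => ha0 j)
      have hpC : 0 < ∏ j ∈ S, min (-(A j)) (B j) := Finset.prod_pos (fun j _ => hC0 j)
      have hkey : (∏ j ∈ S, b j) ≤ (∏ j ∈ S, a j) * (∏ j ∈ S, min (-(A j)) (B j))⁻¹ := by
        calc (∏ j ∈ S, b j) ≤ ∏ j ∈ S, (a j * (min (-(A j)) (B j))⁻¹) := by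
              apply Finset.prod_le_prod (fun j _ => hb0 j)
              intro j _
              rw [← div_eq_mul_inv]
              exact (le_div_iff₀ (hC0 j)).2 (hbC j)
          _ = (∏ j ∈ S, a j) * (∏ j ∈ S, min (-(A j)) (B j))⁻¹ := by
              rw [Finset.prod_mul_distrib, Finset.prod_inv_distrib]
      have hsd : (∏ j ∈ Finset.univ \ S, a j) * (∏ j ∈ S, a j) = ∏ k, a k :=
        Finset.prod_sdiff (Finset.subset_univ S)
      set e := ∫ ω, ∏ j ∈ S, φ j ω ∂P with hedef
      calc (∏ j ∈ S, b j) * ((∏ j ∈ Finset.univ \ S, a j) * e)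
          ≤ (∏ j ∈ S, b j) * ((∏ j ∈ Finset.univ \ S, a j) * |e|) :=
            mul_le_mul_of_nonneg_left
              (mul_le_mul_of_nonneg_left (le_abs_self _) hpa') hpb
        _ ≤ ((∏ j ∈ S, a j) * (∏ j ∈ S, min (-(A j)) (B j))⁻¹)
              * ((∏ j ∈ Finset.univ \ S, a j) * |e|) := by
            apply mul_le_mul_of_nonneg_right hkey
            positivity
        _ = (∏ k, a k) * ((∏ j ∈ S, min (-(A j)) (B j))⁻¹ * |e|) := by
            rw [← hsd]; ring
    linarith
  have hprodA : ∏ k, a k ≤ Real.exp (t^2*σ2/8) := by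
    calc ∏ k, a k ≤ ∏ k, Real.exp (t^2*(B k - A k)^2/8) :=
        Finset.prod_le_prod (fun k _ => ha0 k) (fun k _ => hoeff_a _ _ _ (hA k) (hB k))
      _ = Real.exp (∑ k, t^2*(B k - A k)^2/8) := (Real.exp_sum _ _).symm
      _ = Real.exp (t^2*σ2/8) := by
          congr 1
          rw [hσ2, Finset.mul_sum, Finset.sum_div]
  have hμ : 0 ≤ 1 + multErrorAll P A B φ := by linarith
  have hIchain : ∫ ω, Real.exp (t * ∑ k, φ k ω) ∂P
      ≤ Real.exp (t^2*σ2/8) * (1 + multErrorAll P A B φ) := by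
    calc ∫ ω, Real.exp (t * ∑ k, φ k ω) ∂P
        ≤ ∫ ω, ∏ k, (a k + b k * φ k ω) ∂P := hstep1
      _ ≤ (∏ k, a k) * (1 + multErrorAll P A B φ) := by rw [hexpand]; exact hbound2
      _ ≤ Real.exp (t^2*σ2/8) * (1 + multErrorAll P A B φ) :=
          mul_le_mul_of_nonneg_right hprodA hμ
  have hch := ProbabilityTheory.measure_ge_le_exp_mul_mgf (μ := P)
    (X := fun ω => ∑ k, φ k ω) lam ht.le hexpInt
  have hmgf : ProbabilityTheory.mgf (fun ω => ∑ k, φ k ω) P t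
      = ∫ ω, Real.exp (t * ∑ k, φ k ω) ∂P := rfl
  rw [hmgf] at hch
  have hLHS : (P {ω | lam < ∑ k, φ k ω}).toReal ≤ (P {ω | lam ≤ ∑ k, φ k ω}).toReal :=
    ENNReal.toReal_mono (measure_ne_top _ _) (by
      apply measure_mono
      intro ω h
      simp only [Set.mem_setOf_eq] at h ⊢
      exact le_of_lt h)
  have harg : -t*lam + t^2*σ2/8 = -(2*lam^2)/σ2 := by
    rw [htdef]
    field_simp
    ring
  calc (P {ω | lam < ∑ k, φ k ω}).toReal
      ≤ (P {ω | lam ≤ ∑ k, φ k ω}).toReal := hLHS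
    _ ≤ Real.exp (-t*lam) * ∫ ω, Real.exp (t * ∑ k, φ k ω) ∂P := hch
    _ ≤ Real.exp (-t*lam) * (Real.exp (t^2*σ2/8) * (1 + multErrorAll P A B φ)) :=
        mul_le_mul_of_nonneg_left hIchain (Real.exp_pos _).le
    _ = (1 + multErrorAll P A B φ) * Real.exp (-t*lam + t^2*σ2/8) := by
        rw [Real.exp_add]; ring
    _ = (1 + multErrorAll P A B φ) * Real.exp (-(2*lam^2)/σ2) := by rw [harg]
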